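/- Let C1 ⊆ V1, C2 ⊆ V2 be proper cones and P : V1 → V2 a linear map. The following are equivalent: (1) P is (C1,C2)-entanglement breaking; (2) for every proper cone C in a finite-dimensional real vector space V, (id_V ⊗ P)(C ⊗max C1) ⊆ C ⊗min C2. -/

import Mathlib

open scoped TensorProduct
open Set

noncomputable section

/-- The dual cone of a set `C`, inside the algebraic dual space. -/
def dualConeSet {V : Type*} [AddCommGroup V] [Module ℝ V] (C : Set V) :
    Set (Module.Dual ℝ V) := {φ | ∀ x ∈ C, 0 ≤ φ x}

/-- A proper cone: a closed convex cone which is generating (`C - C = V`) and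
pointed (`C ∩ (-C) = {0}`). -/
def IsProperCone {V : Type*} [NormedAddCommGroup V] [NormedSpace ℝ V] (C : Set V) : Prop :=
  IsClosed C ∧ Convex ℝ C ∧ (∀ ⦃c : ℝ⦄, 0 < c → ∀ ⦃x⦄, x ∈ C → c • x ∈ C) ∧
    (∀ v : V, ∃ x ∈ C, ∃ y ∈ C, v = x - y) ∧ C ∩ (-C) = {0}

/-- `(C₁,C₂)`-entanglement breaking maps. -/
def IsEntanglementBreaking {V₁ V₂ : Type*} [AddCommGroup V₁] [Module ℝ V₁]
    [AddCommGroup V₂] [Module ℝ V₂] (C₁ : Set V₁) (C₂ : Set V₂) (P : V₁ →ₗ[ℝ] V₂) : Prop :=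
  ∃ (m : ℕ) (φ : Fin m → Module.Dual ℝ V₁) (x : Fin m → V₂),
    (∀ i, φ i ∈ dualConeSet C₁) ∧ (∀ i, x i ∈ C₂) ∧ ∀ v, P v = ∑ i, φ i v • x i

/-- The `k`-fold minimal tensor power of a cone. -/
def minTensorPow {V : Type*} [AddCommGroup V] [Module ℝ V] (C : Set V) (k : ℕ) :
    Set (⨂[ℝ] _ : Fin k, V) :=
  convexHull ℝ {z | ∃ x : Fin k → V, (∀ i, x i ∈ C) ∧ z = PiTensorProduct.tprod ℝ x}

/-- The functional on the `k`-fold tensor power induced by a family of functionals,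
`x₁ ⊗ ⋯ ⊗ x_k ↦ ∏ i, φ i (x i)`. -/
def dualPairing {V : Type*} [AddCommGroup V] [Module ℝ V] {k : ℕ}
    (φ : Fin k → Module.Dual ℝ V) : (⨂[ℝ] _ : Fin k, V) →ₗ[ℝ] ℝ :=
  PiTensorProduct.lift ((MultilinearMap.mkPiAlgebra ℝ (Fin k) ℝ).compLinearMap φ)

/-- The `k`-fold maximal tensor power of a cone: the dual of the minimal tensor power of
the dual cone, under the canonical identification of `(V^{⊗k})*` with `(V*)^{⊗k}`. -/
def maxTensorPow {V : Type*} [AddCommGroup V] [Module ℝ V] (C : Set V) (k : ℕ) :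
    Set (⨂[ℝ] _ : Fin k, V) :=
  {z | ∀ φ : Fin k → Module.Dual ℝ V, (∀ i, φ i ∈ dualConeSet C) → 0 ≤ dualPairing φ z}

/-- `(C₁,C₂)`-entanglement annihilating maps: `P^{⊗k}` maps the `k`-fold maximal tensor power
of `C₁` into the `k`-fold minimal tensor power of `C₂`, for every `k ≥ 1`. -/
def IsEntanglementAnnihilating {V₁ V₂ : Type*} [AddCommGroup V₁] [Module ℝ V₁]
    [AddCommGroup V₂] [Module ℝ V₂] (C₁ : Set V₁) (C₂ : Set V₂) (P : V₁ →ₗ[ℝ] V₂) : Prop :=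
  ∀ k : ℕ, 1 ≤ k →
    Set.MapsTo (⇑(PiTensorProduct.map fun _ : Fin k => P))
      (maxTensorPow C₁ k) (minTensorPow C₂ k)

/-- A pair of cones is resilient if every entanglement annihilating map between them is
entanglement breaking. -/
def IsResilientPair {V₁ V₂ : Type*} [AddCommGroup V₁] [Module ℝ V₁]
    [AddCommGroup V₂] [Module ℝ V₂] (C₁ : Set V₁) (C₂ : Set V₂) : Prop :=
  ∀ P : V₁ →ₗ[ℝ] V₂, IsEntanglementAnnihilating C₁ C₂ P → IsEntanglementBreaking C₁ C₂ P

/-- The minimal tensor product of two cones. -/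
def minTensor {V W : Type*} [AddCommGroup V] [Module ℝ V] [AddCommGroup W] [Module ℝ W]
    (C : Set V) (D : Set W) : Set (V ⊗[ℝ] W) :=
  convexHull ℝ {z | ∃ x ∈ C, ∃ y ∈ D, z = x ⊗ₜ[ℝ] y}

/-- The maximal tensor product of two cones: the dual of the minimal tensor product of the
dual cones, under the canonical identification of `(V ⊗ W)*` with `V* ⊗ W*`. -/
def maxTensor {V W : Type*} [AddCommGroup V] [Module ℝ V] [AddCommGroup W] [Module ℝ W]
    (C : Set V) (D : Set W) : Set (V ⊗[ℝ] W) :=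
  {z | ∀ φ ∈ dualConeSet C, ∀ ψ ∈ dualConeSet D,
      0 ≤ TensorProduct.dualDistrib ℝ V W (φ ⊗ₜ[ℝ] ψ) z}

/-- The Lorentz cone `L_n ⊆ ℝ ⊕ ℝⁿ`. -/
def lorentzCone (n : ℕ) : Set (ℝ × EuclideanSpace ℝ (Fin n)) := {p | ‖p.2‖ ≤ p.1}



/-! ### Auxiliary lemmas -/

section Aux

open Module TensorProduct

variable {E : Type*} [NormedAddCommGroup E] [NormedSpace ℝ E]

lemma IsProperCone.zero_mem' {C : Set E} (hC : IsProperCone C) : (0 : E) ∈ C := by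
  have h : (0 : E) ∈ C ∩ (-C) := by rw [hC.2.2.2.2]; rfl
  exact h.1

lemma IsProperCone.smul_mem' {C : Set E} (hC : IsProperCone C) {c : ℝ} (hc : 0 ≤ c)
    {x : E} (hx : x ∈ C) : c • x ∈ C := by
  rcases hc.lt_or_eq with h | h
  · exact hC.2.2.1 h hx
  · simpa [← h] using hC.zero_mem'

/-- The bipolar theorem for proper cones: a point on which all dual functionals are
nonnegative belongs to the cone. -/
lemma mem_of_dualConeSet_nonneg {C : Set E} (hC : IsProperCone C) {x : E}
    (h : ∀ φ ∈ dualConeSet C, 0 ≤ φ x) : x ∈ C := by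
  by_contra hx
  obtain ⟨f, u, hfC, hfx⟩ := geometric_hahn_banach_closed_point hC.2.1 hC.1 hx
  have hu : 0 < u := by simpa using hfC 0 hC.zero_mem'
  have hneg : ∀ a ∈ C, f a ≤ 0 := by
    intro a ha
    by_contra hfa
    push_neg at hfa
    have hc : (0:ℝ) < (u + 1) / f a := by positivity
    have h2 := hfC _ (hC.2.2.1 hc ha)
    rw [map_smul, smul_eq_mul, div_mul_cancel₀] at h2
    · linarith
    · exact ne_of_gt hfa
  have hφ : -((f : E →ₗ[ℝ] ℝ)) ∈ dualConeSet C := by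
    intro a ha
    simpa using hneg a ha
  have h3 := h _ hφ
  simp only [LinearMap.neg_apply, ContinuousLinearMap.coe_coe] at h3
  linarith

variable {V W : Type*} [AddCommGroup V] [Module ℝ V] [AddCommGroup W] [Module ℝ W]

lemma dualConeSet_zero_mem (C : Set V) : (0 : Module.Dual ℝ V) ∈ dualConeSet C :=
  fun x _ => by simp

lemma dualConeSet_add_mem {C : Set V} {φ ψ : Module.Dual ℝ V}
    (hφ : φ ∈ dualConeSet C) (hψ : ψ ∈ dualConeSet C) : φ + ψ ∈ dualConeSet C :=
  fun x hx => by simpa using add_nonneg (hφ x hx) (hψ x hx)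

lemma dualConeSet_smul_mem {C : Set V} {c : ℝ} (hc : 0 ≤ c) {φ : Module.Dual ℝ V}
    (hφ : φ ∈ dualConeSet C) : c • φ ∈ dualConeSet C :=
  fun x hx => by simpa using mul_nonneg hc (hφ x hx)

lemma tmul_mem_minTensor {C : Set V} {D : Set W} {x : V} {y : W} (hx : x ∈ C) (hy : y ∈ D) :
    x ⊗ₜ[ℝ] y ∈ minTensor C D :=
  subset_convexHull ℝ _ ⟨x, hx, y, hy, rfl⟩

lemma minTensor_smul_mem {C : Set V} {D : Set W}
    (hC : ∀ ⦃c : ℝ⦄, 0 < c → ∀ ⦃x⦄, x ∈ C → c • x ∈ C) {c : ℝ} (hc : 0 < c)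
    {z : V ⊗[ℝ] W} (hz : z ∈ minTensor C D) : c • z ∈ minTensor C D := by
  have h1 : c • z ∈ (LinearMap.lsmul ℝ (V ⊗[ℝ] W) c) '' minTensor C D := ⟨z, hz, rfl⟩
  rw [minTensor, LinearMap.image_convexHull] at h1
  refine convexHull_mono ?_ h1
  rintro _ ⟨_, ⟨x, hx, y, hy, rfl⟩, rfl⟩
  exact ⟨c • x, hC hc hx, y, hy, by simp [TensorProduct.smul_tmul']⟩

lemma minTensor_add_mem {C : Set V} {D : Set W}
    (hC : ∀ ⦃c : ℝ⦄, 0 < c → ∀ ⦃x⦄, x ∈ C → c • x ∈ C)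
    {a b : V ⊗[ℝ] W} (ha : a ∈ minTensor C D) (hb : b ∈ minTensor C D) :
    a + b ∈ minTensor C D := by
  have hmid : (1/2 : ℝ) • a + (1/2 : ℝ) • b ∈ minTensor C D :=
    (convex_convexHull ℝ _) ha hb (by norm_num) (by norm_num) (by norm_num)
  have h2 := minTensor_smul_mem hC (by norm_num : (0:ℝ) < 2) hmid
  rw [smul_add, smul_smul, smul_smul] at h2
  norm_num at h2
  exact h2

lemma minTensor_rep {C : Set V} {D : Set W} (h0 : (0:V) ∈ C)
    (hsm : ∀ ⦃c : ℝ⦄, 0 < c → ∀ ⦃x⦄, x ∈ C → c • x ∈ C)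
    {z : V ⊗[ℝ] W} (hz : z ∈ minTensor C D) :
    ∃ (n : ℕ) (x : Fin n → V) (y : Fin n → W),
      (∀ i, x i ∈ C) ∧ (∀ i, y i ∈ D) ∧ z = ∑ i, x i ⊗ₜ[ℝ] y i := by
  classical
  have hsm' : ∀ ⦃c : ℝ⦄, 0 ≤ c → ∀ ⦃x⦄, x ∈ C → c • x ∈ C := by
    intro c hc x hx
    rcases hc.lt_or_eq with h | h
    · exact hsm h hx
    · simpa [← h] using h0
  rw [minTensor, convexHull_eq] at hz
  obtain ⟨ι, t, w, p, hw0, hw1, hp, hcm⟩ := hz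
  have key : ∀ k : Fin t.card, ∃ x ∈ C, ∃ y ∈ D,
      w (t.equivFin.symm k) • p (t.equivFin.symm k) = x ⊗ₜ[ℝ] y := by
    intro k
    obtain ⟨x, hx, y, hy, hxy⟩ := hp _ (t.equivFin.symm k).2
    refine ⟨w (t.equivFin.symm k) • x, hsm' (hw0 _ (t.equivFin.symm k).2) hx, y, hy, ?_⟩
    rw [hxy, TensorProduct.smul_tmul']
  choose x hx y hy hrep using key
  refine ⟨t.card, x, y, hx, hy, ?_⟩
  calc z = ∑ i ∈ t, w i • p i := by
        rw [← hcm, Finset.centerMass_eq_of_sum_1 _ _ hw1]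
    _ = ∑ i : t, w (i:ι) • p (i:ι) := (Finset.sum_coe_sort t _).symm
    _ = ∑ k : Fin t.card, w (t.equivFin.symm k : ι) • p (t.equivFin.symm k : ι) :=
        (Equiv.sum_comp t.equivFin.symm (fun i : t => w (i:ι) • p (i:ι))).symm
    _ = ∑ k, x k ⊗ₜ[ℝ] y k := Finset.sum_congr rfl fun k _ => hrep k

/-- Contraction of the second tensor factor against a functional. -/
def ebContract (φ : Module.Dual ℝ W) : V ⊗[ℝ] W →ₗ[ℝ] V :=
  TensorProduct.lift (((LinearMap.lsmul ℝ V).comp φ).flip)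

@[simp] lemma ebContract_tmul (φ : Module.Dual ℝ W) (v : V) (u : W) :
    ebContract φ (v ⊗ₜ[ℝ] u) = φ u • v := rfl

end Aux

/-- **Proposition.** `P` is `(C₁,C₂)`-entanglement breaking iff for every proper cone `C`,
`(id ⊗ P)(C ⊗max C₁) ⊆ C ⊗min C₂`. -/
theorem entanglementBreaking_iff_breaks_all_entanglement
    {V₁ V₂ : Type} [NormedAddCommGroup V₁] [NormedSpace ℝ V₁] [FiniteDimensional ℝ V₁]
    [NormedAddCommGroup V₂] [NormedSpace ℝ V₂] [FiniteDimensional ℝ V₂]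
    (C₁ : Set V₁) (C₂ : Set V₂) (h₁ : IsProperCone C₁) (h₂ : IsProperCone C₂)
    (P : V₁ →ₗ[ℝ] V₂) :
    IsEntanglementBreaking C₁ C₂ P ↔
      ∀ (V : Type) [NormedAddCommGroup V] [NormedSpace ℝ V] [FiniteDimensional ℝ V],
        ∀ C : Set V, IsProperCone C →
          Set.MapsTo (⇑(TensorProduct.map (LinearMap.id : V →ₗ[ℝ] V) P))
            (maxTensor C C₁) (minTensor C C₂) := by
  constructor
  · rintro ⟨m, φ, x, hφ, hx, hP⟩
    intro V _ _ _ C hC z hz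
    classical
    have hPsum : TensorProduct.map (LinearMap.id : V →ₗ[ℝ] V) P
        = ∑ i, ((TensorProduct.mk ℝ V V₂).flip (x i)).comp (ebContract (φ i)) := by
      apply TensorProduct.ext'
      intro v u
      simp [hP u, TensorProduct.tmul_sum, TensorProduct.smul_tmul',
        TensorProduct.tmul_smul]
    have hz' : (TensorProduct.map (LinearMap.id : V →ₗ[ℝ] V) P) z
        = ∑ i, (ebContract (φ i) z) ⊗ₜ[ℝ] x i := by
      rw [hPsum]
      simp
    rw [hz']
    refine Finset.sum_induction _ (· ∈ minTensor C C₂)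
      (fun a b ha hb => minTensor_add_mem hC.2.2.1 ha hb)
      (by simpa using tmul_mem_minTensor hC.zero_mem' h₂.zero_mem') ?_
    intro i _
    refine tmul_mem_minTensor ?_ (hx i)
    apply mem_of_dualConeSet_nonneg hC
    intro ψ hψ
    have hcomp : ψ.comp (ebContract (φ i))
        = TensorProduct.dualDistrib ℝ V V₁ (ψ ⊗ₜ[ℝ] φ i) := by
      apply TensorProduct.ext'
      intro v u
      simp [TensorProduct.dualDistrib_apply, smul_eq_mul, mul_comm]
    have hpair := LinearMap.congr_fun hcomp z
    simp only [LinearMap.comp_apply] at hpair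
    rw [hpair]
    exact hz ψ hψ (φ i) (hφ i)
  · intro h
    classical
    set b := Module.finBasis ℝ V₁ with hb
    set e : Module.Dual ℝ V₁ ≃ₗ[ℝ] V₁ := b.toDualEquiv.symm with he_def
    have he : ∀ ξ : Module.Dual ℝ V₁, e ξ = ∑ i, ξ (b i) • b i := by
      intro ξ
      rw [he_def, LinearEquiv.symm_apply_eq]
      refine b.ext fun j => ?_
      simp [Module.Basis.toDual_apply, Finset.sum_ite_eq']
    set K : Set (Module.Dual ℝ V₁) := dualConeSet C₁ with hK
    set C : Set V₁ := e '' K with hCdef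
    -- basic cone facts about `K`
    have hKsmul : ∀ ⦃c : ℝ⦄, 0 ≤ c → ∀ ⦃ξ⦄, ξ ∈ K → c • ξ ∈ K :=
      fun c hc ξ hξ => dualConeSet_smul_mem hc hξ
    -- `C` is a proper cone
    have hCset : C = ⋂ v ∈ C₁, {x : V₁ | 0 ≤ e.symm x v} := by
      ext x
      simp only [Set.mem_iInter, Set.mem_setOf_eq]
      constructor
      · rintro ⟨ξ, hξ, rfl⟩ v hv
        rw [LinearEquiv.symm_apply_apply]
        exact hξ v hv
      · intro hx
        exact ⟨e.symm x, hx, e.apply_symm_apply x⟩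
    have hCclosed : IsClosed C := by
      rw [hCset]
      refine isClosed_iInter fun v => isClosed_iInter fun _ => ?_
      have hcont : Continuous fun x : V₁ => e.symm x v := by
        have : (fun x : V₁ => e.symm x v)
            = ⇑((LinearMap.applyₗ v).comp (e.symm : V₁ →ₗ[ℝ] Module.Dual ℝ V₁)) := rfl
        rw [this]
        exact LinearMap.continuous_of_finiteDimensional _
      exact isClosed_le continuous_const hcont
    have hKconvex : Convex ℝ K := by
      intro ξ hξ η hη a c ha hc hac
      intro v hv
      simpa using add_nonneg (mul_nonneg ha (hξ v hv)) (mul_nonneg hc (hη v hv))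
    have hCconvex : Convex ℝ C := hKconvex.linear_image (e : Module.Dual ℝ V₁ →ₗ[ℝ] V₁)
    have hCsmul : ∀ ⦃c : ℝ⦄, 0 < c → ∀ ⦃x⦄, x ∈ C → c • x ∈ C := by
      rintro c hc _ ⟨ξ, hξ, rfl⟩
      exact ⟨c • ξ, hKsmul hc.le hξ, map_smul e c ξ⟩
    have hspan : Submodule.span ℝ K = ⊤ := by
      apply Submodule.span_eq_top_of_ne_zero
      intro z hz
      by_contra hcon
      push_neg at hcon
      have hz1 : z ∈ C₁ := mem_of_dualConeSet_nonneg h₁ fun ξ hξ => (hcon ξ hξ).ge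
      have hz2 : -z ∈ C₁ := mem_of_dualConeSet_nonneg h₁ fun ξ hξ => by
        simp [hcon ξ hξ]
      have : z ∈ C₁ ∩ (-C₁) := ⟨hz1, by simpa using hz2⟩
      rw [h₁.2.2.2.2] at this
      exact hz this
    have hdiff : ∀ ψ : Module.Dual ℝ V₁, ∃ ξ ∈ K, ∃ η ∈ K, ψ = ξ - η := by
      intro ψ
      have hψ : ψ ∈ Submodule.span ℝ K := by rw [hspan]; exact Submodule.mem_top
      induction hψ using Submodule.span_induction with
      | mem ξ hξ => exact ⟨ξ, hξ, 0, dualConeSet_zero_mem C₁, by simp⟩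
      | zero => exact ⟨0, dualConeSet_zero_mem C₁, 0, dualConeSet_zero_mem C₁, by simp⟩
      | add ξ η _ _ ihξ ihη =>
        obtain ⟨a, ha, a', ha', rfl⟩ := ihξ
        obtain ⟨c, hc, c', hc', rfl⟩ := ihη
        exact ⟨a + c, dualConeSet_add_mem ha hc, a' + c', dualConeSet_add_mem ha' hc',
          by abel⟩
      | smul r ξ _ ih =>
        obtain ⟨a, ha, a', ha', rfl⟩ := ih
        rcases le_or_gt 0 r with hr | hr
        · exact ⟨r • a, hKsmul hr ha, r • a', hKsmul hr ha', by rw [smul_sub]⟩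
        · refine ⟨(-r) • a', hKsmul (by linarith) ha', (-r) • a, hKsmul (by linarith) ha, ?_⟩
          module
    have hCgen : ∀ v : V₁, ∃ x ∈ C, ∃ y ∈ C, v = x - y := by
      intro v
      obtain ⟨ξ, hξ, η, hη, hd⟩ := hdiff (e.symm v)
      refine ⟨e ξ, ⟨ξ, hξ, rfl⟩, e η, ⟨η, hη, rfl⟩, ?_⟩
      have : e (e.symm v) = e (ξ - η) := congrArg e hd
      rwa [e.apply_symm_apply, map_sub] at this
    have hCpointed : C ∩ (-C) = {0} := by
      apply Set.eq_singleton_iff_unique_mem.mpr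
      constructor
      · exact ⟨⟨0, dualConeSet_zero_mem C₁, map_zero e⟩,
          by rw [Set.mem_neg, neg_zero]; exact ⟨0, dualConeSet_zero_mem C₁, map_zero e⟩⟩
      · rintro x ⟨⟨ξ, hξ, rfl⟩, hx2⟩
        rw [Set.mem_neg] at hx2
        obtain ⟨η, hη, hη2⟩ := hx2
        have hηξ : η = -ξ := by
          apply e.injective
          rw [hη2, map_neg]
        have hnegξ : -ξ ∈ K := hηξ ▸ hη
        have hξ0 : ξ = 0 := by
          have hvanish : ∀ v ∈ C₁, ξ v = 0 := fun v hv =>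
            le_antisymm (by simpa using hnegξ v hv) (hξ v hv)
          ext v
          obtain ⟨p, hp, q, hq, rfl⟩ := h₁.2.2.2.1 v
          simp [map_sub, hvanish p hp, hvanish q hq]
        rw [hξ0, map_zero]
    have hCproper : IsProperCone C := ⟨hCclosed, hCconvex, hCsmul, hCgen, hCpointed⟩
    -- the canonical "maximally entangled" tensor
    set τ : V₁ ⊗[ℝ] V₁ := ∑ i, b i ⊗ₜ[ℝ] b i with hτ
    have hτmax : τ ∈ maxTensor C C₁ := by
      intro φ hφ ψ hψ
      have hxC₁ : (e φ) ∈ C₁ := by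
        apply mem_of_dualConeSet_nonneg h₁
        intro ξ hξ
        have h1 : ξ (e φ) = ∑ i, φ (b i) * ξ (b i) := by
          rw [he φ, map_sum]; simp
        have h2 : φ (e ξ) = ∑ i, ξ (b i) * φ (b i) := by
          rw [he ξ, map_sum]; simp
        have hsym : ξ (e φ) = φ (e ξ) := by
          rw [h1, h2]; exact Finset.sum_congr rfl fun i _ => mul_comm _ _
        rw [hsym]
        exact hφ (e ξ) ⟨ξ, hξ, rfl⟩
      have hpair : TensorProduct.dualDistrib ℝ V₁ V₁ (φ ⊗ₜ[ℝ] ψ) τ = ψ (e φ) := by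
        rw [hτ, map_sum, he φ, map_sum]
        simp [TensorProduct.dualDistrib_apply]
      show 0 ≤ TensorProduct.dualDistrib ℝ V₁ V₁ (φ ⊗ₜ[ℝ] ψ) τ
      rw [hpair]
      exact hψ _ hxC₁
    have hmem := h V₁ C hCproper hτmax
    obtain ⟨n, zz, y, hzz, hy, hrep⟩ :=
      minTensor_rep hCproper.zero_mem' hCproper.2.2.1 hmem
    have hPτ : (TensorProduct.map (LinearMap.id : V₁ →ₗ[ℝ] V₁) P) τ
        = ∑ i, b i ⊗ₜ[ℝ] P (b i) := by
      rw [hτ, map_sum]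
      simp
    refine ⟨n, fun j => e.symm (zz j), y, ?_, hy, ?_⟩
    · intro j
      obtain ⟨ξ, hξ, hξ2⟩ := hzz j
      show e.symm (zz j) ∈ dualConeSet C₁
      rw [← hξ2, e.symm_apply_apply]
      exact hξ
    · intro v
      set ℓv : V₁ →ₗ[ℝ] ℝ :=
        (LinearMap.applyₗ v).comp (e.symm : V₁ →ₗ[ℝ] Module.Dual ℝ V₁) with hℓv
      set Λv : V₁ ⊗[ℝ] V₂ →ₗ[ℝ] V₂ :=
        TensorProduct.lift ((LinearMap.lsmul ℝ V₂).comp ℓv) with hΛv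
      have hΛtmul : ∀ (u : V₁) (w : V₂), Λv (u ⊗ₜ[ℝ] w) = (e.symm u) v • w := fun u w => rfl
      have heq : ∑ i, b i ⊗ₜ[ℝ] P (b i) = ∑ j, zz j ⊗ₜ[ℝ] y j := by
        rw [← hPτ, hrep]
      have key := congrArg Λv heq
      rw [map_sum, map_sum] at key
      have hLHS : ∑ i, Λv (b i ⊗ₜ[ℝ] P (b i)) = P v := by
        have hco : ∀ i, e.symm (b i) v = b.repr v i := by
          intro i
          rw [he_def, LinearEquiv.symm_symm]
          simp [Module.Basis.toDual_apply_right]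
        calc ∑ i, Λv (b i ⊗ₜ[ℝ] P (b i)) = ∑ i, b.repr v i • P (b i) := by
              refine Finset.sum_congr rfl fun i _ => ?_
              rw [hΛtmul, hco]
          _ = P (∑ i, b.repr v i • b i) := by
              rw [map_sum]
              exact Finset.sum_congr rfl fun i _ => (map_smul P _ _).symm
          _ = P v := by rw [Module.Basis.sum_repr]
      rw [hLHS] at key
      rw [key]
      exact Finset.sum_congr rfl fun j _ => hΛtmul _ _

end
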